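/- Let V be a finite set, G a simple graph on V with closed neighborhoods N_v, and d ∈ ℕ. Define the auxiliary graph G_d on V with an edge between u and v whenever |N_u ∩ N_v| > 2d. If Π is any partition of V with φ(Π) ≤ d, then any two vertices u, v lying in the same connected component of G_d lie in the same block of Π. In other words, the partition Π_d of V into connected components of G_d refines Π. -/
import Mathlib


open scoped symmDiff

open Finset

variable {V : Type*} [Fintype V] [DecidableEq V]

/-- Closed neighborhood of `v`: `v` together with its adjacent vertices. -/
def nbhd (G : SimpleGraph V) [DecidableRel G.Adj] (v : V) : Finset V :=
  insert v (G.neighborFinset v)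

/-- `P` encodes a partition of `V`, where `P v` is the block containing `v`. -/
def IsPartitionFun (P : V → Finset V) : Prop :=
  (∀ v, v ∈ P v) ∧ ∀ u v : V, u ∈ P v → P u = P v

/-- Maximum disagreement of the partition `P`. -/
def phi (G : SimpleGraph V) [DecidableRel G.Adj] (P : V → Finset V) : ℕ :=
  Finset.univ.sup fun v => ((P v) ∆ (nbhd G v)).card

/-- Auxiliary graph `G_d`: edges are pairs whose closed neighborhoods intersect
in more than `2 * d` vertices. -/
def Gd (G : SimpleGraph V) [DecidableRel G.Adj] (d : ℕ) : SimpleGraph V :=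
  SimpleGraph.fromRel fun u v => 2 * d < (nbhd G u ∩ nbhd G v).card

/-- The block of `v` in the partition of `V` into connected components of `G_d`. -/
def compBlock (G : SimpleGraph V) [DecidableRel G.Adj] (d : ℕ)
    [DecidableRel (Gd G d).Reachable] (v : V) : Finset V :=
  Finset.univ.filter fun u => (Gd G d).Reachable u v

/-- The set `U^d_C` for the component `C` of `v`. -/
def Ud (G : SimpleGraph V) [DecidableRel G.Adj] (d : ℕ)
    [DecidableRel (Gd G d).Reachable] (v : V) : Finset V :=
  Finset.univ.filter fun x =>
    ∀ w ∈ compBlock G d x, ∀ u ∈ compBlock G d v, ((nbhd G w) ∆ (nbhd G u)).card ≤ 2 * d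

lemma adj_block (G : SimpleGraph V) [DecidableRel G.Adj] (d : ℕ)
    (P : V → Finset V) (hP : IsPartitionFun P) (hphi : phi G P ≤ d)
    (u v : V) (h : 2 * d < (nbhd G u ∩ nbhd G v).card) : P u = P v := by
  by_contra hne
  have hdisj : ∀ x, x ∈ P u → x ∉ P v := by
    intro x hxu hxv
    exact hne ((hP.2 x u hxu).symm.trans (hP.2 x v hxv))
  have hbound : ∀ w : V, ((P w) ∆ (nbhd G w)).card ≤ d := fun w =>
    le_trans (Finset.le_sup (f := fun x => ((P x) ∆ (nbhd G x)).card) (Finset.mem_univ w)) hphi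
  have hsub : nbhd G u ∩ nbhd G v ⊆ ((P u) ∆ (nbhd G u)) ∪ ((P v) ∆ (nbhd G v)) := by
    intro x hx
    simp only [Finset.mem_inter] at hx
    rcases em (x ∈ P u) with hxu | hxu
    · exact Finset.mem_union_right _
        (by simp [Finset.mem_symmDiff, hx.2, hdisj x hxu])
    · exact Finset.mem_union_left _ (by simp [Finset.mem_symmDiff, hx.1, hxu])
  have h1 := Finset.card_le_card hsub
  have h2 := Finset.card_union_le ((P u) ∆ (nbhd G u)) ((P v) ∆ (nbhd G v))
  have h3 := hbound u
  have h4 := hbound v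
  omega

theorem statement9 (G : SimpleGraph V) [DecidableRel G.Adj] (d : ℕ)
    (P : V → Finset V) (hP : IsPartitionFun P) (hphi : phi G P ≤ d)
    (u v : V) (h : (Gd G d).Reachable u v) :
    P u = P v := by
  obtain ⟨w⟩ := h
  induction w with
  | nil => rfl
  | @cons a b c hadj _ ih =>
    rw [Gd, SimpleGraph.fromRel_adj] at hadj
    rcases hadj.2 with h' | h'
    · exact (adj_block G d P hP hphi a b h').trans ih
    · exact ((adj_block G d P hP hphi b a h').symm).trans ih
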